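/- Let $s \in \mathbb{C}$ with $\rho := \Re s > 0$. For any complex Hilbert-space setting with $b_s(v,w) = s^2(\mu v,w)_\Omega + s(\gamma v,w)_{\Gamma_A} + (A\nabla v,\nabla w)_\Omega$ and the norm $\|v\|_{H^1_s}^2 = |s|^2\|v\|_{\mu,\Omega}^2 + (|s|^2/\rho)\|v\|_{\gamma,\Gamma_A}^2 + \|\nabla v\|_{A,\Omega}^2$, one has the coercivity identity $\|v\|_{H^1_s}^2 = \rho^{-1}\,\Re\, b_s(v, s v)$ and consequently $\|v\|_{H^1_s}^2 \le (|s|/\rho)\,|b_s(v,v)|$ for all $v$. -/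

import Mathlib

/- STATEMENT 0: coercivity identity for the frequency-domain wave form.
Abstract Hilbert setting: `Mμ v` represents `√μ v` in `L²(Ω)`, `Mγ v` represents
`√γ v|_{Γ_A}` in `L²(Γ_A)`, `G v` represents `A^{1/2}∇v` in `L²(Ω)^d`, so that
`(μ v, w)_Ω = ⟪Mμ w, Mμ v⟫`, etc. (Mathlib inner products are conjugate-linear
in the first argument, the physical pairings are conjugate-linear in the second.) -/

open scoped ComplexInnerProductSpace

theorem stmt0
    {V Eμ Eγ Eg : Type*} [AddCommGroup V] [Module ℂ V]
    [NormedAddCommGroup Eμ] [InnerProductSpace ℂ Eμ]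
    [NormedAddCommGroup Eγ] [InnerProductSpace ℂ Eγ]
    [NormedAddCommGroup Eg] [InnerProductSpace ℂ Eg]
    (Mμ : V →ₗ[ℂ] Eμ) (Mγ : V →ₗ[ℂ] Eγ) (G : V →ₗ[ℂ] Eg)
    (s : ℂ) (ρ : ℝ) (hρ : ρ = s.re) (hρpos : 0 < ρ)
    (bs : V → V → ℂ)
    (hbs : ∀ v w, bs v w =
      s ^ 2 * ⟪Mμ w, Mμ v⟫ + s * ⟪Mγ w, Mγ v⟫ + ⟪G w, G v⟫)
    (Hsq : V → ℝ)
    (hH : ∀ v, Hsq v = ‖s‖ ^ 2 * ‖Mμ v‖ ^ 2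
      + (‖s‖ ^ 2 / ρ) * ‖Mγ v‖ ^ 2 + ‖G v‖ ^ 2)
    (v : V) :
    Hsq v = ρ⁻¹ * (bs v (s • v)).re ∧
    Hsq v ≤ (‖s‖ / ρ) * ‖bs v v‖ := by
  have hρne : ρ ≠ 0 := ne_of_gt hρpos
  have hsmul : bs v (s • v) = (starRingEnd ℂ) s * bs v v := by
    rw [hbs, hbs]
    simp only [map_smul, inner_smul_left]
    ring
  have habs : ‖s‖ ^ 2 = s.re ^ 2 + s.im ^ 2 := by
    rw [Complex.sq_norm, Complex.normSq_apply]; ring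
  have hre : (bs v (s • v)).re = ρ * (‖s‖ ^ 2 * ‖Mμ v‖ ^ 2
      + (‖s‖ ^ 2 / ρ) * ‖Mγ v‖ ^ 2 + ‖G v‖ ^ 2) := by
    have e1 : (⟪Mμ v, Mμ v⟫ : ℂ) = ((‖Mμ v‖ ^ 2 : ℝ) : ℂ) := by
      rw [@inner_self_eq_norm_sq_to_K ℂ]; norm_cast
    have e2 : (⟪Mγ v, Mγ v⟫ : ℂ) = ((‖Mγ v‖ ^ 2 : ℝ) : ℂ) := by
      rw [@inner_self_eq_norm_sq_to_K ℂ]; norm_cast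
    have e3 : (⟪G v, G v⟫ : ℂ) = ((‖G v‖ ^ 2 : ℝ) : ℂ) := by
      rw [@inner_self_eq_norm_sq_to_K ℂ]; norm_cast
    rw [hsmul, hbs, e1, e2, e3, show s ^ 2 = s * s from sq s]
    simp only [Complex.mul_re, Complex.add_re, Complex.add_im, Complex.mul_im,
      Complex.conj_re, Complex.conj_im, Complex.ofReal_re, Complex.ofReal_im]
    have hsre : s.re ≠ 0 := by rw [← hρ]; exact hρne
    rw [habs, hρ]
    field_simp
    ring
  have h1 : Hsq v = ρ⁻¹ * (bs v (s • v)).re := by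
    rw [hre, hH]; field_simp
  refine ⟨h1, ?_⟩
  have hle : (bs v (s • v)).re ≤ ‖s‖ * ‖bs v v‖ := by
    calc (bs v (s • v)).re ≤ ‖bs v (s • v)‖ := Complex.re_le_norm _
      _ = ‖s‖ * ‖bs v v‖ := by
          rw [hsmul, norm_mul, Complex.norm_conj]
  rw [h1, div_mul_eq_mul_div, ← div_eq_inv_mul, div_le_div_iff_of_pos_right hρpos]
  exact hle
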